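/- arXiv:2504.17153 — 2 statements merged into one kernel-verified Lean document; each statement's English description precedes it below -/
import Mathlib

section
/- Let T > 0, let κ : [−T,T] → ℝ be continuous, let w be a Jacobi solution for κ on [−T,T] with w(−T) = 0, let q : [−T,T] → ℝ be C², and set f := q·w. Then ∫_{−T}^{T} ((f'(t))² − κ(t)(f(t))²) dt = (q(T))² w(T) w'(T) + ∫_{−T}^{T} (q'(t) w(t))² dt. -/
open Set

open MeasureTheory

/-- A Jacobi solution for `κ` on `[a,b]`: a function that is `C²` on `[a,b]` and
satisfies `z'' + κ z = 0` there (derivatives taken within the interval). -/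
def IsJacobiOn (κ z : ℝ → ℝ) (a b : ℝ) : Prop :=
  ContDiffOn ℝ 2 z (Set.Icc a b) ∧
    ∀ t ∈ Set.Icc a b,
      derivWithin (derivWithin z (Set.Icc a b)) (Set.Icc a b) t + κ t * z t = 0

/-- Key index-form identity: if `w` is a Jacobi solution on `[-T,T]` with
`w(-T) = 0`, `q` is `C²` on `[-T,T]` and `f = q·w`, then
`∫ ((f')² - κ f²) = q(T)² w(T) w'(T) + ∫ (q' w)²`. -/
theorem indexForm_factorization
    (T : ℝ) (hT : 0 < T) (κ : ℝ → ℝ) (hκ : ContinuousOn κ (Set.Icc (-T) T))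
    (w q : ℝ → ℝ) (hw : IsJacobiOn κ w (-T) T) (hw0 : w (-T) = 0)
    (hq : ContDiffOn ℝ 2 q (Set.Icc (-T) T)) :
    (∫ t in (-T)..T, ((deriv (fun s => q s * w s) t) ^ 2
        - κ t * (q t * w t) ^ 2))
      = (q T) ^ 2 * w T * derivWithin w (Set.Icc (-T) T) T
        + ∫ t in (-T)..T, (derivWithin q (Set.Icc (-T) T) t * w t) ^ 2 := by
  have hle : (-T) ≤ T := by linarith
  have hlt : (-T) < T := by linarith
  set s : Set ℝ := Set.Icc (-T) T with hs_def
  have hsUD : UniqueDiffOn ℝ s := uniqueDiffOn_Icc hlt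
  obtain ⟨hw2, hJ⟩ := hw
  set w' : ℝ → ℝ := derivWithin w s with hw'_def
  set q' : ℝ → ℝ := derivWithin q s with hq'_def
  have hwc : ContinuousOn w s := hw2.continuousOn
  have hqc : ContinuousOn q s := hq.continuousOn
  have hw'cd : ContDiffOn ℝ 1 w' s := hw2.derivWithin hsUD (by norm_num)
  have hq'cd : ContDiffOn ℝ 1 q' s := hq.derivWithin hsUD (by norm_num)
  have hw'c : ContinuousOn w' s := hw'cd.continuousOn
  have hq'c : ContinuousOn q' s := hq'cd.continuousOn
  have hwdiff : DifferentiableOn ℝ w s := hw2.differentiableOn (by norm_num)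
  have hqdiff : DifferentiableOn ℝ q s := hq.differentiableOn (by norm_num)
  have hw'diff : DifferentiableOn ℝ w' s := hw'cd.differentiableOn (by norm_num)
  have hmem : ∀ t ∈ Set.Ioo (-T) T, s ∈ nhds t := fun t ht => Icc_mem_nhds ht.1 ht.2
  have hwd : ∀ t ∈ Set.Ioo (-T) T, HasDerivAt w (w' t) t := fun t ht =>
    ((hwdiff t (Set.Ioo_subset_Icc_self ht)).hasDerivWithinAt).hasDerivAt (hmem t ht)
  have hqd : ∀ t ∈ Set.Ioo (-T) T, HasDerivAt q (q' t) t := fun t ht =>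
    ((hqdiff t (Set.Ioo_subset_Icc_self ht)).hasDerivWithinAt).hasDerivAt (hmem t ht)
  have hw'd : ∀ t ∈ Set.Ioo (-T) T, HasDerivAt w' (derivWithin w' s t) t := fun t ht =>
    ((hw'diff t (Set.Ioo_subset_Icc_self ht)).hasDerivWithinAt).hasDerivAt (hmem t ht)
  -- deriv of the product on the interior
  have hderiv_eq : ∀ t ∈ Set.Ioo (-T) T,
      deriv (fun u => q u * w u) t = q' t * w t + q t * w' t := fun t ht =>
    ((hqd t ht).mul (hwd t ht)).deriv
  -- derivative of g t := q t * q t * w t * w' t on the interior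
  have hgd : ∀ x ∈ Set.Ioo (-T) T, HasDerivAt (fun t => q t * q t * w t * w' t)
      ((q' x * w x + q x * w' x) ^ 2 - κ x * (q x * w x) ^ 2 - (q' x * w x) ^ 2) x := by
    intro x hx
    have hxs : x ∈ s := Set.Ioo_subset_Icc_self hx
    have hval : derivWithin w' s x = -(κ x * w x) := by
      have := hJ x hxs; linarith
    have h := (((hqd x hx).mul (hqd x hx)).mul (hwd x hx)).mul (hw'd x hx)
    rw [hval] at h
    refine h.congr_deriv ?_
    simp only [Pi.mul_apply]
    ring
  -- continuity / integrability of the pieces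
  have hGc : ContinuousOn (fun t =>
      (q' t * w t + q t * w' t) ^ 2 - κ t * (q t * w t) ^ 2 - (q' t * w t) ^ 2) s :=
    ((((hq'c.mul hwc).add (hqc.mul hw'c)).pow 2).sub
      (hκ.mul ((hqc.mul hwc).pow 2))).sub ((hq'c.mul hwc).pow 2)
  have hBc : ContinuousOn (fun t => (q' t * w t) ^ 2) s := (hq'c.mul hwc).pow 2
  have hGint : IntervalIntegrable (fun t =>
      (q' t * w t + q t * w' t) ^ 2 - κ t * (q t * w t) ^ 2 - (q' t * w t) ^ 2)
      volume (-T) T := by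
    apply ContinuousOn.intervalIntegrable
    rwa [Set.uIcc_of_le hle]
  have hBint : IntervalIntegrable (fun t => (q' t * w t) ^ 2) volume (-T) T := by
    apply ContinuousOn.intervalIntegrable
    rwa [Set.uIcc_of_le hle]
  have hgc : ContinuousOn (fun t => q t * q t * w t * w' t) s :=
    ((hqc.mul hqc).mul hwc).mul hw'c
  -- fundamental theorem of calculus
  have hFTC : (∫ t in (-T)..T,
      ((q' t * w t + q t * w' t) ^ 2 - κ t * (q t * w t) ^ 2 - (q' t * w t) ^ 2))
      = q T * q T * w T * w' T - q (-T) * q (-T) * w (-T) * w' (-T) := by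
    apply intervalIntegral.integral_eq_sub_of_hasDeriv_right_of_le hle hgc _ hGint
    intro x hx
    exact ((hgd x hx).hasDerivWithinAt)
  -- replace the full `deriv` by the interior formula, a.e.
  have hae : ∀ᵐ x ∂(volume : Measure ℝ), x ∈ Set.uIoc (-T) T →
      (deriv (fun u => q u * w u) x) ^ 2 - κ x * (q x * w x) ^ 2
        = (q' x * w x + q x * w' x) ^ 2 - κ x * (q x * w x) ^ 2 := by
    have hT0 : ∀ᵐ x : ℝ ∂volume, x ≠ T := by
      rw [ae_iff]
      simp [Set.setOf_eq_eq_singleton]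
    filter_upwards [hT0] with x hx hxm
    rw [Set.uIoc_of_le hle] at hxm
    have hxI : x ∈ Set.Ioo (-T) T := ⟨hxm.1, lt_of_le_of_ne hxm.2 hx⟩
    rw [hderiv_eq x hxI]
  have step1 : (∫ t in (-T)..T, ((deriv (fun u => q u * w u) t) ^ 2
        - κ t * (q t * w t) ^ 2))
      = ∫ t in (-T)..T, ((q' t * w t + q t * w' t) ^ 2 - κ t * (q t * w t) ^ 2) :=
    intervalIntegral.integral_congr_ae hae
  have step2 : (∫ t in (-T)..T,
        ((q' t * w t + q t * w' t) ^ 2 - κ t * (q t * w t) ^ 2))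
      = (∫ t in (-T)..T,
          ((q' t * w t + q t * w' t) ^ 2 - κ t * (q t * w t) ^ 2 - (q' t * w t) ^ 2))
        + ∫ t in (-T)..T, (q' t * w t) ^ 2 := by
    rw [← intervalIntegral.integral_add hGint hBint]
    congr 1
    funext t
    ring
  rw [step1, step2, hFTC, hw0]
  ring
end

section
/- Let T > 0, let κ : [−T,T] → ℝ be continuous, and suppose there exist −T ≤ a < b ≤ T and a Jacobi solution z for κ on [−T,T] that is not identically zero with z(a) = z(b) = 0. Define f : [−T,T] → ℝ by f = z on [a,b] and f = 0 elsewhere. Then f is piecewise C², f is not identically zero, f(−T) = f(T) = 0, and I_κ(f) = 0. -/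
open Set

/-- `f` is piecewise `C²` on `[a,b]`: continuous, and there is a partition
`a = t₀ < t₁ < ⋯ < tₙ = b` such that `f` is `C²` on each `[tᵢ, tᵢ₊₁]`. -/
def PiecewiseC2On (f : ℝ → ℝ) (a b : ℝ) : Prop :=
  ContinuousOn f (Set.Icc a b) ∧
    ∃ (n : ℕ) (t : ℕ → ℝ), 0 < n ∧ t 0 = a ∧ t n = b ∧
      (∀ i, i < n → t i < t (i + 1)) ∧
      (∀ i, i < n → ContDiffOn ℝ 2 f (Set.Icc (t i) (t (i + 1))))

/-- The index form `I_κ(f) = ∫_a^b ((f')² - κ f²)`; the derivative `deriv f`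
agrees a.e. with the (piecewise) derivative of `f`. -/
noncomputable def indexForm (κ f : ℝ → ℝ) (a b : ℝ) : ℝ :=
  ∫ t in a..b, ((deriv f t) ^ 2 - κ t * (f t) ^ 2)

/-- Gluing continuity on two closed sets. -/
lemma continuousOn_union_closed {f : ℝ → ℝ} {s t : Set ℝ} (hsc : IsClosed s)
    (htc : IsClosed t) (hs : ContinuousOn f s) (ht : ContinuousOn f t) :
    ContinuousOn f (s ∪ t) := by
  intro x hx
  have h1 : ContinuousWithinAt f s x := by
    by_cases h : x ∈ s
    · exact hs x h
    · exact continuousWithinAt_of_notMem_closure (by rwa [hsc.closure_eq])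
  have h2 : ContinuousWithinAt f t x := by
    by_cases h : x ∈ t
    · exact ht x h
    · exact continuousWithinAt_of_notMem_closure (by rwa [htc.closure_eq])
  exact h1.union h2

/-- A nontrivial Jacobi solution vanishing at `a < b` inside `[-T,T]`, cut off
outside `[a,b]`, is a nontrivial piecewise `C²` test function vanishing at the
endpoints whose index is zero. -/
theorem conjugate_points_null_vector
    (T : ℝ) (hT : 0 < T) (κ : ℝ → ℝ) (hκ : ContinuousOn κ (Set.Icc (-T) T))
    (a b : ℝ) (haT : -T ≤ a) (hab : a < b) (hbT : b ≤ T)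
    (z : ℝ → ℝ) (hz : IsJacobiOn κ z (-T) T)
    (hznz : ∃ t ∈ Set.Icc (-T) T, z t ≠ 0)
    (hza : z a = 0) (hzb : z b = 0)
    (f : ℝ → ℝ) (hf : ∀ t, f t = if t ∈ Set.Icc a b then z t else 0) :
    PiecewiseC2On f (-T) T ∧ (∃ t ∈ Set.Icc (-T) T, f t ≠ 0) ∧
      f (-T) = 0 ∧ f T = 0 ∧ indexForm κ f (-T) T = 0 := by
  have hTT : (-T : ℝ) < T := by linarith
  set I : Set ℝ := Set.Icc (-T) T with hI
  have hUD : UniqueDiffOn ℝ I := uniqueDiffOn_Icc hTT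
  obtain ⟨hzC, hzJ⟩ := hz
  set z' : ℝ → ℝ := derivWithin z I with hz'def
  set z'' : ℝ → ℝ := derivWithin z' I with hz''def
  have hzc : ContinuousOn z I := hzC.continuousOn
  have hz'C : ContDiffOn ℝ 1 z' I := hzC.derivWithin hUD (by norm_num)
  have hz'c : ContinuousOn z' I := hz'C.continuousOn
  have hzd : ∀ t ∈ I, HasDerivWithinAt z (z' t) I t := fun t ht =>
    ((hzC.differentiableOn (by norm_num)) t ht).hasDerivWithinAt
  have hz'd : ∀ t ∈ I, HasDerivWithinAt z' (z'' t) I t := fun t ht =>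
    ((hz'C.differentiableOn one_ne_zero) t ht).hasDerivWithinAt
  have hODE : ∀ t ∈ I, z'' t = -(κ t * z t) := fun t ht => by
    have := hzJ t ht; linarith
  have hsub : Set.Icc a b ⊆ I := Set.Icc_subset_Icc haT hbT
  have hfz : ∀ t ∈ Set.Icc a b, f t = z t := fun t ht => by rw [hf t, if_pos ht]
  have hfle : ∀ t, t ≤ a → f t = 0 := by
    intro t ht
    rw [hf t]
    split_ifs with h
    · rw [le_antisymm ht h.1, hza]
    · rfl
  have hfge : ∀ t, b ≤ t → f t = 0 := by
    intro t ht
    rw [hf t]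
    split_ifs with h
    · rw [le_antisymm h.2 ht, hzb]
    · rfl
  -- interior facts
  have hmemI : ∀ t ∈ Set.Ioo a b, I ∈ nhds t := fun t ht =>
    Icc_mem_nhds (by linarith [ht.1]) (by linarith [ht.2])
  have hzAt : ∀ t ∈ Set.Ioo a b, HasDerivAt z (z' t) t := fun t ht =>
    (hzd t (hsub (Set.Ioo_subset_Icc_self ht))).hasDerivAt (hmemI t ht)
  have hz'At : ∀ t ∈ Set.Ioo a b, HasDerivAt z' (z'' t) t := fun t ht =>
    (hz'd t (hsub (Set.Ioo_subset_Icc_self ht))).hasDerivAt (hmemI t ht)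
  have hfev : ∀ t ∈ Set.Ioo a b, f =ᶠ[nhds t] z := by
    intro t ht
    filter_upwards [isOpen_Ioo.mem_nhds ht] with s hs
    exact hfz s (Set.Ioo_subset_Icc_self hs)
  have hfAt : ∀ t ∈ Set.Ioo a b, HasDerivAt f (z' t) t := fun t ht =>
    (hzAt t ht).congr_of_eventuallyEq (hfev t ht)
  have hderivf : ∀ t ∈ Set.Ioo a b, deriv f t = z' t := fun t ht => (hfAt t ht).deriv
  -- Part 1 : PiecewiseC2On
  set c : ℝ := if a = -T then a + (b - a) / 3 else a with hc
  set d : ℝ := if b = T then b - (b - a) / 3 else b with hd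
  have hac : a ≤ c := by rw [hc]; split_ifs <;> linarith
  have hcb : c ≤ b := by rw [hc]; split_ifs <;> linarith
  have had : a ≤ d := by rw [hd]; split_ifs <;> linarith
  have hdb : d ≤ b := by rw [hd]; split_ifs <;> linarith
  have hcd : c < d := by rw [hc, hd]; split_ifs <;> linarith
  have hTc : -T < c := by
    rw [hc]; split_ifs with h
    · linarith
    · exact lt_of_le_of_ne haT (Ne.symm h)
  have hdT : d < T := by
    rw [hd]; split_ifs with h
    · linarith
    · exact lt_of_le_of_ne hbT h
  have pieceM : ContDiffOn ℝ 2 f (Set.Icc c d) := by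
    have hsub2 : Set.Icc c d ⊆ Set.Icc a b := Set.Icc_subset_Icc hac hdb
    exact ((hzC.mono (hsub2.trans hsub)).congr fun t ht => hfz t (hsub2 ht))
  have pieceL : ContDiffOn ℝ 2 f (Set.Icc (-T) c) := by
    by_cases h : a = -T
    · have hsub2 : Set.Icc (-T) c ⊆ Set.Icc a b := Set.Icc_subset_Icc (le_of_eq h) hcb
      exact ((hzC.mono (hsub2.trans hsub)).congr fun t ht => hfz t (hsub2 ht))
    · have hca : c = a := by rw [hc, if_neg h]
      exact contDiffOn_const.congr fun t ht => hfle t (hca ▸ ht.2)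
  have pieceR : ContDiffOn ℝ 2 f (Set.Icc d T) := by
    by_cases h : b = T
    · have hsub2 : Set.Icc d T ⊆ Set.Icc a b := Set.Icc_subset_Icc had (le_of_eq h.symm)
      exact ((hzC.mono (hsub2.trans hsub)).congr fun t ht => hfz t (hsub2 ht))
    · have hdb' : d = b := by rw [hd, if_neg h]
      exact contDiffOn_const.congr fun t ht => hfge t (hdb' ▸ ht.1)
  have hfc : ContinuousOn f I := by
    have h1 : ContinuousOn f (Set.Icc (-T) c ∪ Set.Icc c d) :=
      continuousOn_union_closed isClosed_Icc isClosed_Icc pieceL.continuousOn pieceM.continuousOn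
    rw [Set.Icc_union_Icc_eq_Icc (le_of_lt hTc) (le_of_lt hcd)] at h1
    have h2 : ContinuousOn f (Set.Icc (-T) d ∪ Set.Icc d T) :=
      continuousOn_union_closed isClosed_Icc isClosed_Icc h1 pieceR.continuousOn
    rwa [Set.Icc_union_Icc_eq_Icc (by linarith) (le_of_lt hdT)] at h2
  have part1 : PiecewiseC2On f (-T) T := by
    refine ⟨hfc, 3, fun i => if i = 0 then -T else if i = 1 then c else if i = 2 then d else T,
      by norm_num, by norm_num, by norm_num, ?_, ?_⟩
    · intro i hi
      interval_cases i <;> simp <;> [exact hTc; exact hcd; exact hdT]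
    · intro i hi
      interval_cases i <;> simp <;> [exact pieceL; exact pieceM; exact pieceR]
  -- Part 2 : nontriviality, via ODE uniqueness
  have part2 : ∃ t ∈ Set.Icc (-T) T, f t ≠ 0 := by
    by_contra hcon
    push_neg at hcon
    have hz0 : ∀ t ∈ Set.Icc a b, z t = 0 := fun t ht => by
      rw [← hfz t ht]; exact hcon t (hsub ht)
    set m : ℝ := (a + b) / 2 with hm
    have hmab : m ∈ Set.Ioo a b := ⟨by rw [hm]; linarith, by rw [hm]; linarith⟩
    have hmI : m ∈ I := hsub (Set.Ioo_subset_Icc_self hmab)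
    have hzm : z m = 0 := hz0 m (Set.Ioo_subset_Icc_self hmab)
    have hz'm : z' m = 0 := by
      have hev : z =ᶠ[nhds m] fun _ => 0 := by
        filter_upwards [isOpen_Ioo.mem_nhds hmab] with s hs
        exact hz0 s (Set.Ioo_subset_Icc_self hs)
      have h0 : HasDerivAt z 0 m := (hasDerivAt_const m (0:ℝ)).congr_of_eventuallyEq hev
      exact (h0.hasDerivWithinAt).derivWithin (hUD m hmI)
    -- bound on κ
    obtain ⟨M, hM⟩ := isCompact_Icc.exists_bound_of_continuousOn hκ
    set K : NNReal := Real.toNNReal (max M 1) with hK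
    have hKcoe : (K : ℝ) = max M 1 :=
      Real.coe_toNNReal _ (le_trans zero_le_one (le_max_right M 1))
    set ρ : ℝ → ℝ := fun t => max (-T) (min T t) with hρ
    have hρI : ∀ t, ρ t ∈ I := fun t =>
      ⟨le_max_left _ _, max_le (by linarith) (min_le_left _ _)⟩
    have hρid : ∀ t ∈ I, ρ t = t := fun t ht => by
      rw [hρ]; simp only []; rw [min_eq_right ht.2, max_eq_right ht.1]
    set v : ℝ → ℝ × ℝ → ℝ × ℝ := fun t x => (x.2, -(κ (ρ t) * x.1)) with hv
    have hvL : ∀ t, LipschitzWith K (v t) := by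
      intro t
      apply LipschitzWith.of_dist_le_mul
      intro x y
      rw [Prod.dist_eq, Prod.dist_eq, hKcoe]
      simp only [hv, Real.dist_eq]
      have habs : ‖κ (ρ t)‖ ≤ M := hM (ρ t) (hρI t)
      rw [Real.norm_eq_abs] at habs
      have h2 : -(κ (ρ t) * x.1) - -(κ (ρ t) * y.1) = -(κ (ρ t)) * (x.1 - y.1) := by ring
      rw [h2, abs_mul, abs_neg]
      apply max_le
      · nlinarith [le_max_right M 1, le_max_right (|x.1 - y.1|) (|x.2 - y.2|),
          abs_nonneg (x.2 - y.2), abs_nonneg (x.1 - y.1)]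
      · nlinarith [le_max_left M 1, le_max_left (|x.1 - y.1|) (|x.2 - y.2|),
          abs_nonneg (x.2 - y.2), abs_nonneg (x.1 - y.1), abs_nonneg (κ (ρ t))]
    set y : ℝ → ℝ × ℝ := fun t => (z t, z' t) with hy
    have hyc : ContinuousOn y I := hzc.prodMk hz'c
    have hyd : ∀ t ∈ I, HasDerivWithinAt y (v t (y t)) I t := by
      intro t ht
      have heq : v t (y t) = (z' t, z'' t) := by
        simp only [hv, hy, hρid t ht, hODE t ht]
      rw [heq]
      exact (hzd t ht).prodMk (hz'd t ht)
    have hym : y m = (0, 0) := by rw [hy]; simp [hzm, hz'm]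
    have hg'0 : ∀ (t : ℝ), v t ((fun _ => ((0:ℝ), (0:ℝ))) t) = (0, 0) := by
      intro t; simp [hv]
    -- right uniqueness on [m, T]
    have hright : Set.EqOn y (fun _ => ((0:ℝ), (0:ℝ))) (Set.Icc m T) := by
      have hmT : -T ≤ m := le_trans haT (le_of_lt hmab.1)
      apply ODE_solution_unique_of_mem_Icc_right
        (fun t _ => (hvL t).lipschitzOnWith (s := Set.univ))
        (hyc.mono (Set.Icc_subset_Icc hmT le_rfl)) ?_ (fun _ _ => Set.mem_univ _)
        continuousOn_const ?_ (fun _ _ => Set.mem_univ _) (by rw [hym])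
      · intro t ht
        refine (hyd t ⟨le_trans hmT ht.1, le_of_lt ht.2⟩).mono_of_mem_nhdsWithin ?_
        rw [mem_nhdsWithin]
        exact ⟨Set.Iio T, isOpen_Iio, ht.2, fun s hs =>
          ⟨le_trans (le_trans hmT ht.1) hs.2, le_of_lt hs.1⟩⟩
      · intro t ht
        rw [hg'0 t]
        exact hasDerivWithinAt_const _ _ _
    -- left uniqueness on [-T, m]
    have hleft : Set.EqOn y (fun _ => ((0:ℝ), (0:ℝ))) (Set.Icc (-T) m) := by
      have hmT : m ≤ T := le_trans (le_of_lt hmab.2) hbT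
      apply ODE_solution_unique_of_mem_Icc_left
        (fun t _ => (hvL t).lipschitzOnWith (s := Set.univ))
        (hyc.mono (Set.Icc_subset_Icc le_rfl hmT)) ?_ (fun _ _ => Set.mem_univ _)
        continuousOn_const ?_ (fun _ _ => Set.mem_univ _) (by rw [hym])
      · intro t ht
        refine (hyd t ⟨le_of_lt ht.1, le_trans ht.2 hmT⟩).mono_of_mem_nhdsWithin ?_
        rw [mem_nhdsWithin]
        exact ⟨Set.Ioi (-T), isOpen_Ioi, ht.1, fun s hs =>
          ⟨le_of_lt hs.1, le_trans hs.2 (le_trans ht.2 hmT)⟩⟩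
      · intro t ht
        rw [hg'0 t]
        exact hasDerivWithinAt_const _ _ _
    obtain ⟨t₀, ht₀, hzt₀⟩ := hznz
    rcases le_total t₀ m with h | h
    · have := hleft ⟨ht₀.1, h⟩
      apply hzt₀
      have : (z t₀, z' t₀) = ((0:ℝ), (0:ℝ)) := this
      exact congrArg Prod.fst this
    · have := hright ⟨h, ht₀.2⟩
      apply hzt₀
      have : (z t₀, z' t₀) = ((0:ℝ), (0:ℝ)) := this
      exact congrArg Prod.fst this
  -- Part 3 : endpoints
  have hfT1 : f (-T) = 0 := hfle (-T) haT
  have hfT2 : f T = 0 := hfge T hbT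
  -- Part 4 : index form vanishes
  have part4 : indexForm κ f (-T) T = 0 := by
    set φ : ℝ → ℝ := fun t => (deriv f t) ^ 2 - κ t * (f t) ^ 2 with hφ
    set g0 : ℝ → ℝ := fun t => (z' t) ^ 2 - κ t * (z t) ^ 2 with hg0
    have hA : ∀ t ∈ Set.Ioo a b, φ t = g0 t := by
      intro t ht
      simp only [hφ, hg0, hderivf t ht, hfz t (Set.Ioo_subset_Icc_self ht)]
    have hB : ∀ t, t < a → φ t = 0 := by
      intro t ht
      have hev : f =ᶠ[nhds t] fun _ => 0 := by
        filter_upwards [isOpen_Iio.mem_nhds ht] with s hs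
        exact hfle s (le_of_lt hs)
      have h1 : deriv f t = 0 := ((hasDerivAt_const t (0:ℝ)).congr_of_eventuallyEq hev).deriv
      have h2 : f t = 0 := hfle t (le_of_lt ht)
      simp [hφ, h1, h2]
    have hC : ∀ t, b < t → φ t = 0 := by
      intro t ht
      have hev : f =ᶠ[nhds t] fun _ => 0 := by
        filter_upwards [isOpen_Ioi.mem_nhds ht] with s hs
        exact hfge s (le_of_lt hs)
      have h1 : deriv f t = 0 := ((hasDerivAt_const t (0:ℝ)).congr_of_eventuallyEq hev).deriv
      have h2 : f t = 0 := hfge t (le_of_lt ht)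
      simp [hφ, h1, h2]
    have hnea : ∀ᵐ t : ℝ, t ≠ a := by
      have : MeasureTheory.volume ({a} : Set ℝ) = 0 := MeasureTheory.measure_singleton a
      rw [← MeasureTheory.compl_mem_ae_iff] at this
      filter_upwards [this] with t ht
      simpa using ht
    have hneb : ∀ᵐ t : ℝ, t ≠ b := by
      have : MeasureTheory.volume ({b} : Set ℝ) = 0 := MeasureTheory.measure_singleton b
      rw [← MeasureTheory.compl_mem_ae_iff] at this
      filter_upwards [this] with t ht
      simpa using ht
    -- continuity / integrability of g0
    have hg0c : ContinuousOn g0 (Set.Icc a b) :=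
      ((hz'c.mono hsub).pow 2).sub ((hκ.mono hsub).mul ((hzc.mono hsub).pow 2))
    have hg0int : IntervalIntegrable g0 MeasureTheory.volume a b := by
      apply ContinuousOn.intervalIntegrable
      rwa [Set.uIcc_of_le (le_of_lt hab)]
    -- FTC: ∫ g0 = 0
    have hFTC : (∫ t in a..b, g0 t) = 0 := by
      have hFc : ContinuousOn (fun t => z t * z' t) (Set.Icc a b) :=
        (hzc.mono hsub).mul (hz'c.mono hsub)
      have hFd : ∀ t ∈ Set.Ioo a b,
          HasDerivWithinAt (fun t => z t * z' t) (g0 t) (Set.Ioi t) t := by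
        intro t ht
        have h1 := (hzAt t ht).mul (hz'At t ht)
        have heq : z' t * z' t + z t * z'' t = g0 t := by
          rw [hg0, hODE t (hsub (Set.Ioo_subset_Icc_self ht))]; ring
        rw [heq] at h1
        exact h1.hasDerivWithinAt
      have := intervalIntegral.integral_eq_sub_of_hasDeriv_right_of_le (le_of_lt hab)
        hFc hFd hg0int
      rw [this, hza, hzb]
      ring
    -- integrability of φ on the three pieces
    have hφint1 : IntervalIntegrable φ MeasureTheory.volume (-T) a := by
      rw [intervalIntegrable_iff_integrableOn_Ioc_of_le haT]
      have hae : (fun _ => (0:ℝ)) =ᵐ[MeasureTheory.volume.restrict (Set.Ioc (-T) a)] φ := by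
        rw [Filter.EventuallyEq, MeasureTheory.ae_restrict_iff' measurableSet_Ioc]
        filter_upwards [hnea] with t ht hmem
        exact (hB t (lt_of_le_of_ne hmem.2 ht)).symm
      exact (MeasureTheory.integrable_zero _ _ _).congr hae
    have hφint2 : IntervalIntegrable φ MeasureTheory.volume a b := by
      rw [intervalIntegrable_iff_integrableOn_Ioc_of_le (le_of_lt hab)]
      have hg0' : MeasureTheory.IntegrableOn g0 (Set.Ioc a b) MeasureTheory.volume := by
        rw [← intervalIntegrable_iff_integrableOn_Ioc_of_le (le_of_lt hab)]
        exact hg0int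
      have hae : g0 =ᵐ[MeasureTheory.volume.restrict (Set.Ioc a b)] φ := by
        rw [Filter.EventuallyEq, MeasureTheory.ae_restrict_iff' measurableSet_Ioc]
        filter_upwards [hneb] with t ht hmem
        exact (hA t ⟨hmem.1, lt_of_le_of_ne hmem.2 ht⟩).symm
      exact hg0'.congr hae
    have hφint3 : IntervalIntegrable φ MeasureTheory.volume b T := by
      rw [intervalIntegrable_iff_integrableOn_Ioc_of_le hbT]
      have hae : (fun _ => (0:ℝ)) =ᵐ[MeasureTheory.volume.restrict (Set.Ioc b T)] φ := by
        rw [Filter.EventuallyEq, MeasureTheory.ae_restrict_iff' measurableSet_Ioc]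
        filter_upwards with t hmem
        exact (hC t hmem.1).symm
      exact (MeasureTheory.integrable_zero _ _ _).congr hae
    -- values of the three integrals
    have hval1 : (∫ t in (-T)..a, φ t) = 0 := by
      rw [intervalIntegral.integral_congr_ae (g := fun _ => (0:ℝ)) ?_,
        intervalIntegral.integral_zero]
      filter_upwards [hnea] with t ht hmem
      rw [Set.uIoc_of_le haT] at hmem
      exact hB t (lt_of_le_of_ne hmem.2 ht)
    have hval2 : (∫ t in a..b, φ t) = 0 := by
      rw [intervalIntegral.integral_congr_ae (g := g0) ?_, hFTC]
      filter_upwards [hneb] with t ht hmem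
      rw [Set.uIoc_of_le (le_of_lt hab)] at hmem
      exact hA t ⟨hmem.1, lt_of_le_of_ne hmem.2 ht⟩
    have hval3 : (∫ t in b..T, φ t) = 0 := by
      rw [intervalIntegral.integral_congr_ae (g := fun _ => (0:ℝ)) ?_,
        intervalIntegral.integral_zero]
      filter_upwards with t hmem
      rw [Set.uIoc_of_le hbT] at hmem
      exact hC t hmem.1
    have hsplit1 : (∫ t in (-T)..b, φ t) = (∫ t in (-T)..a, φ t) + ∫ t in a..b, φ t :=
      (intervalIntegral.integral_add_adjacent_intervals hφint1 hφint2).symm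
    have hsplit2 : (∫ t in (-T)..T, φ t) = (∫ t in (-T)..b, φ t) + ∫ t in b..T, φ t :=
      (intervalIntegral.integral_add_adjacent_intervals (hφint1.trans hφint2) hφint3).symm
    show (∫ t in (-T)..T, ((deriv f t) ^ 2 - κ t * (f t) ^ 2)) = 0
    calc (∫ t in (-T)..T, ((deriv f t) ^ 2 - κ t * (f t) ^ 2)) = ∫ t in (-T)..T, φ t := rfl
      _ = 0 := by rw [hsplit2, hsplit1, hval1, hval2, hval3]; ring
  exact ⟨part1, part2, hfT1, hfT2, part4⟩
end
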